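/- For a Coxeter system (W,S) with Weyl group W of a root system, a subset Θ of simple roots with parabolic subgroup W_Θ, and the free Z[q,q⁻¹]-module H_Θ with basis {δ_C : C ∈ W_Θ\W}, define for each simple root α the endomorphism T_α by T_α(δ_C) = 0 if Cs_α = C, T_α(δ_C) = qδ_C + δ_{Cs_α} if Cs_α > C, and T_α(δ_C) = q⁻¹δ_C + δ_{Cs_α} if Cs_α < C (order given by Bruhat order on longest coset representatives). Then the operators S_α := T_α − q satisfy the quadratic relation of the Hecke algebra: (S_α + q)(S_α − q⁻¹) = 0. -/

import Mathlib

open CoxeterSystem LaurentPolynomial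
open scoped Classical

noncomputable section

variable {B W : Type} [Group W]

/-- The (strict) Bruhat order on a Coxeter group: `x < y` iff `y` can be obtained from `x`
by successively multiplying on the right by reflections, each time increasing the length. -/
def BruhatLT {M : CoxeterMatrix B} (cs : CoxeterSystem M W) : W → W → Prop :=
  Relation.TransGen
    (fun a b => (∃ t : W, cs.IsReflection t ∧ b = a * t) ∧ cs.length a < cs.length b)

/-- The Bruhat order (non-strict). -/
def BruhatLE {M : CoxeterMatrix B} (cs : CoxeterSystem M W) (x y : W) : Prop :=
  BruhatLT cs x y ∨ x = y

/-- The type of right cosets `H\W`. -/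
abbrev RightCoset (H : Subgroup W) : Type _ := Quotient (QuotientGroup.rightRel H)

/-- The right coset `H * x`. -/
def rcMk (H : Subgroup W) (x : W) : RightCoset H := Quotient.mk _ x

/-- Right multiplication of a right coset by a group element. -/
def rcMul (H : Subgroup W) (C : RightCoset H) (g : W) : RightCoset H :=
  Quotient.map (fun x => x * g)
    (by
      intro a b hab
      have h' := (QuotientGroup.rightRel_apply).mp hab
      exact (QuotientGroup.rightRel_apply).mpr (by
        simpa [mul_assoc, mul_inv_rev] using h')) C

/-- The standard parabolic subgroup `W_Θ` generated by the simple reflections from `Θ`. -/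
def WP {M : CoxeterMatrix B} (cs : CoxeterSystem M W) (Θ : Set B) : Subgroup W :=
  Subgroup.closure (cs.simple '' Θ)

/-- Right multiplication of a coset in `W_Θ\W` by the simple reflection `s_α`. -/
def sAct {M : CoxeterMatrix B} (cs : CoxeterSystem M W) (Θ : Set B) :
    RightCoset (WP cs Θ) → B → RightCoset (WP cs Θ) :=
  fun C α => rcMul _ C (cs.simple α)

/-- The Laurent polynomial variable `q`. -/
def qq : LaurentPolynomial ℤ := T 1

/-- The Laurent polynomial `q⁻¹`. -/
def qqinv : LaurentPolynomial ℤ := T (-1)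

/-- A Laurent polynomial lies in `q·ℤ[q]`, i.e. all coefficients in degrees `≤ 0` vanish. -/
def InQZq (p : LaurentPolynomial ℤ) : Prop := ∀ n : ℤ, n ≤ 0 → p.coeff n = 0

/-- The operator `T_α` on the free `ℤ[q,q⁻¹]`-module with basis indexed by `κ`,
relative to a right action `act` of the simple reflections on `κ` and a choice
`wc` of (longest) representative of each index:
`T_α δ_C = 0` if `Cs_α = C`; `q δ_C + δ_{Cs_α}` if `Cs_α > C`;
`q⁻¹ δ_C + δ_{Cs_α}` if `Cs_α < C` (Bruhat order on the representatives). -/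
def Tmap {M : CoxeterMatrix B} (cs : CoxeterSystem M W) {κ : Type}
    (act : κ → B → κ) (wc : κ → W) (α : B) :
    (κ →₀ LaurentPolynomial ℤ) →ₗ[LaurentPolynomial ℤ] (κ →₀ LaurentPolynomial ℤ) :=
  Finsupp.linearCombination (LaurentPolynomial ℤ) fun C =>
    if act C α = C then 0
    else if BruhatLT cs (wc C) (wc (act C α)) then
      qq • Finsupp.single C 1 + Finsupp.single (act C α) 1
    else
      qqinv • Finsupp.single C 1 + Finsupp.single (act C α) 1

namespace StrongExch

variable {B W : Type} [Group W] {M : CoxeterMatrix B} (cs : CoxeterSystem M W)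

local prefix:100 "ℓ" => cs.length
local prefix:100 "π" => cs.wordProd

lemma mul_eq_iff (a b c t : W) : a * t * b = c ↔ t = a⁻¹ * c * b⁻¹ := by
  constructor
  · intro h; rw [← h]; group
  · intro h; rw [h]; group

/-- One step of the Tits reflection-cocycle action. -/
def titsFun (i : B) : W × ZMod 2 → W × ZMod 2 :=
  fun p => (cs.simple i * p.1 * cs.simple i, p.2 + if p.1 = cs.simple i then 1 else 0)

lemma titsFun_involutive (i : B) : Function.Involutive (titsFun cs i) := by
  rintro ⟨t, e⟩
  have hc : (cs.simple i * t * cs.simple i = cs.simple i) ↔ (t = cs.simple i) := by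
    rw [mul_eq_iff]; simp
  simp only [titsFun, hc]
  refine Prod.ext (by simp [mul_assoc]) ?_
  split_ifs with h
  · show e + 1 + 1 = e
    have h2 : (1 : ZMod 2) + 1 = 0 := by decide
    rw [add_assoc, h2, add_zero]
  · simp

def titsPerm (i : B) : Equiv.Perm (W × ZMod 2) := (titsFun_involutive cs i).toPerm

lemma titsPerm_apply (i : B) (p : W × ZMod 2) :
    titsPerm cs i p = (cs.simple i * p.1 * cs.simple i,
      p.2 + if p.1 = cs.simple i then 1 else 0) := rfl

lemma semiconj_pow (i j : B) (k : ℕ) :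
    cs.simple j * (cs.simple i * cs.simple j) ^ k
      = (cs.simple j * cs.simple i) ^ k * cs.simple j := by
  have h : SemiconjBy (cs.simple j) (cs.simple i * cs.simple j) (cs.simple j * cs.simple i) :=
    (mul_assoc _ _ _).symm
  exact h.pow_right k

lemma inv_pow_q (i j : B) (k : ℕ) :
    ((cs.simple i * cs.simple j) ^ k)⁻¹ = (cs.simple j * cs.simple i) ^ k := by
  rw [← inv_pow, mul_inv_rev, inv_simple, inv_simple]

lemma titsPerm_mul_pow (i j : B) (k : ℕ) (t : W) (e : ZMod 2) :
    ((titsPerm cs i * titsPerm cs j) ^ k) (t, e) =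
      ((cs.simple i * cs.simple j) ^ k * t * (cs.simple j * cs.simple i) ^ k,
        e + ∑ r ∈ Finset.range (2 * k),
          if t = (cs.simple j * cs.simple i) ^ r * cs.simple j then 1 else 0) := by
  induction k with
  | zero => simp
  | succ k ih =>
    rw [pow_succ', Equiv.Perm.mul_apply, ih, Equiv.Perm.mul_apply, titsPerm_apply, titsPerm_apply]
    set p := cs.simple i * cs.simple j with hp
    set q := cs.simple j * cs.simple i with hq
    have hqp : cs.simple j * p ^ k = q ^ k * cs.simple j := semiconj_pow cs i j k
    have hinv1 : (p ^ k)⁻¹ = q ^ k := inv_pow_q cs i j k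
    have hinv2 : (q ^ k)⁻¹ = p ^ k := inv_pow_q cs j i k
    have e1 : (p ^ k)⁻¹ * cs.simple j * (q ^ k)⁻¹ = q ^ (2 * k) * cs.simple j := by
      rw [hinv1, hinv2, mul_assoc, hqp, ← mul_assoc, ← pow_add, two_mul]
    have hc1 : (p ^ k * t * q ^ k = cs.simple j) ↔ (t = q ^ (2 * k) * cs.simple j) := by
      rw [mul_eq_iff, e1]
    have e2 : (cs.simple j * p ^ k)⁻¹ * cs.simple i * (q ^ k * cs.simple j)⁻¹
        = q ^ (2 * k + 1) * cs.simple j := by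
      rw [mul_inv_rev, mul_inv_rev, inv_simple, hinv1, hinv2]
      calc q ^ k * cs.simple j * cs.simple i * (cs.simple j * p ^ k)
          = q ^ k * (q * (cs.simple j * p ^ k)) := by rw [hq]; simp [mul_assoc]
        _ = q ^ k * (q * (q ^ k * cs.simple j)) := by rw [hqp]
        _ = (q ^ k * (q * q ^ k)) * cs.simple j := by simp [mul_assoc]
        _ = q ^ (2 * k + 1) * cs.simple j := by
            rw [← pow_succ', ← pow_add]
            congr 2
            omega
    have hc2 : (cs.simple j * (p ^ k * t * q ^ k) * cs.simple j = cs.simple i)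
        ↔ (t = q ^ (2 * k + 1) * cs.simple j) := by
      have hrw : cs.simple j * (p ^ k * t * q ^ k) * cs.simple j
          = (cs.simple j * p ^ k) * t * (q ^ k * cs.simple j) := by
        simp [mul_assoc]
      rw [hrw, mul_eq_iff, e2]
    refine Prod.ext ?_ ?_
    · show cs.simple i * (cs.simple j * (p ^ k * t * q ^ k) * cs.simple j) * cs.simple i
        = p ^ (k + 1) * t * q ^ (k + 1)
      rw [pow_succ' p, pow_succ q, hp, hq]
      simp [mul_assoc]
    · show e + (∑ r ∈ Finset.range (2 * k),
          if t = q ^ r * cs.simple j then 1 else 0)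
        + (if p ^ k * t * q ^ k = cs.simple j then 1 else 0)
        + (if cs.simple j * (p ^ k * t * q ^ k) * cs.simple j = cs.simple i then 1 else 0)
        = e + ∑ r ∈ Finset.range (2 * (k + 1)),
            if t = q ^ r * cs.simple j then 1 else 0
      simp only [hc1, hc2]
      rw [show 2 * (k + 1) = 2 * k + 1 + 1 by ring, Finset.sum_range_succ, Finset.sum_range_succ]
      ring

lemma titsPerm_liftable : M.IsLiftable (titsPerm cs) := by
  intro i j
  apply Equiv.ext
  rintro ⟨t, e⟩
  rw [titsPerm_mul_pow]
  have h1 : (cs.simple i * cs.simple j) ^ M i j = 1 := cs.simple_mul_simple_pow i j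
  have h2 : (cs.simple j * cs.simple i) ^ M i j = 1 := cs.simple_mul_simple_pow' i j
  have hsum : ∑ r ∈ Finset.range (2 * M i j),
      (if t = (cs.simple j * cs.simple i) ^ r * cs.simple j then (1 : ZMod 2) else 0) = 0 := by
    set m := M i j
    set f : ℕ → ZMod 2 := fun r => if t = (cs.simple j * cs.simple i) ^ r * cs.simple j
      then (1 : ZMod 2) else 0 with hf
    have hper : ∀ r, f (m + r) = f r := by
      intro r
      simp only [hf, pow_add, h2, one_mul]
    have : ∑ r ∈ Finset.range (2 * m), f r
        = ∑ r ∈ Finset.range m, f r + ∑ r ∈ Finset.Ico m (2 * m), f r := by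
      rw [Finset.sum_range_add_sum_Ico _ (by omega)]
    rw [this, Finset.sum_Ico_eq_sum_range]
    simp only [hper, show 2 * m - m = m by omega]
    have hzz : ∀ x : ZMod 2, x + x = 0 := by decide
    exact hzz _
  rw [h1, h2, hsum]
  simp

/-- The Tits cocycle homomorphism. -/
def tits : W →* Equiv.Perm (W × ZMod 2) := cs.lift ⟨titsPerm cs, titsPerm_liftable cs⟩

lemma tits_simple (i : B) : tits cs (cs.simple i) = titsPerm cs i :=
  cs.lift_apply_simple (titsPerm_liftable cs) i

lemma tits_wordProd (ω : List B) (t : W) (e : ZMod 2) :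
    tits cs (π ω) (t, e) = (π ω * t * (π ω)⁻¹,
      e + ((cs.rightInvSeq ω).count t : ZMod 2)) := by
  induction ω generalizing e with
  | nil => simp [tits]
  | cons i ω ih =>
    rw [wordProd_cons, map_mul, Equiv.Perm.mul_apply, ih, tits_simple, titsPerm_apply]
    have hc : (π ω * t * (π ω)⁻¹ = cs.simple i)
        ↔ ((π ω)⁻¹ * cs.simple i * π ω = t) := by
      rw [mul_eq_iff, inv_inv, eq_comm]
    refine Prod.ext ?_ ?_
    · show cs.simple i * (π ω * t * (π ω)⁻¹) * cs.simple i
        = π (i :: ω) * t * (π (i :: ω))⁻¹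
      rw [wordProd_cons, mul_inv_rev, inv_simple]
      simp [mul_assoc]
    · show e + ((cs.rightInvSeq ω).count t : ZMod 2)
          + (if π ω * t * (π ω)⁻¹ = cs.simple i then 1 else 0)
        = e + ((cs.rightInvSeq (i :: ω)).count t : ZMod 2)
      have hris : cs.rightInvSeq (i :: ω) = ((π ω)⁻¹ * cs.simple i * π ω) :: cs.rightInvSeq ω :=
        rfl
      rw [hris, List.count_cons]
      push_cast
      simp only [hc, beq_iff_eq]
      split_ifs with h
      · ring
      · ring

/-- The reflection cocycle parity. -/
def parity (w t : W) : ZMod 2 := (tits cs w (t, 0)).2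

lemma parity_wordProd (ω : List B) (t : W) :
    parity cs (π ω) t = ((cs.rightInvSeq ω).count t : ZMod 2) := by
  simp [parity, tits_wordProd]

lemma tits_apply (w t : W) (e : ZMod 2) :
    tits cs w (t, e) = (w * t * w⁻¹, e + parity cs w t) := by
  obtain ⟨ω, -, rfl⟩ := cs.exists_reduced_word w
  rw [tits_wordProd, parity_wordProd]

lemma parity_mul (x y t : W) :
    parity cs (x * y) t = parity cs y t + parity cs x (y * t * y⁻¹) := by
  have h : tits cs (x * y) (t, 0) = tits cs x (tits cs y (t, 0)) := by
    rw [map_mul, Equiv.Perm.mul_apply]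
  rw [parity, h, tits_apply cs y t 0, tits_apply cs x, zero_add]

lemma parity_inv (v t : W) : parity cs v⁻¹ t = parity cs v (v⁻¹ * t * v) := by
  have h := parity_mul cs v v⁻¹ t
  rw [mul_inv_cancel] at h
  have h1 : parity cs 1 t = 0 := by
    rw [parity, map_one]
    rfl
  rw [h1, inv_inv] at h
  have hzz : ∀ x y : ZMod 2, 0 = x + y → x = y := by decide
  exact hzz _ _ h

lemma isRightInversion_of_parity {w t : W} (ht : cs.IsReflection t)
    (h : parity cs w t = 1) : cs.IsRightInversion w t := by
  obtain ⟨ω, hlen, rfl⟩ := cs.exists_reduced_word w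
  have hred : cs.IsReduced ω := hlen
  rw [parity_wordProd] at h
  have hmem : t ∈ cs.rightInvSeq ω := by
    by_contra hmem
    rw [List.count_eq_zero_of_not_mem hmem] at h
    simp at h
  exact cs.isRightInversion_of_mem_rightInvSeq hred hmem

lemma parity_self {t : W} (ht : cs.IsReflection t) : parity cs t t = 1 := by
  obtain ⟨v, i, rfl⟩ := ht
  rw [parity_mul, parity_mul, parity_inv]
  have hX : v⁻¹ * (v * cs.simple i * v⁻¹) * v⁻¹⁻¹ = cs.simple i := by group
  have hZ : v⁻¹ * (v * cs.simple i * v⁻¹) * v = cs.simple i := by group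
  have hY : cs.simple i * cs.simple i * (cs.simple i)⁻¹ = cs.simple i := by group
  rw [hX, hZ, hY]
  have h4 : parity cs (cs.simple i) (cs.simple i) = 1 := by
    rw [parity, tits_simple, titsPerm_apply]
    simp
  rw [h4]
  have hzz : ∀ x : ZMod 2, x + (1 + x) = 1 := by decide
  exact hzz _

lemma parity_of_isRightInversion {w t : W} (h : cs.IsRightInversion w t) :
    parity cs w t = 1 := by
  by_contra hne
  have h0 : parity cs w t = 0 := by
    have : ∀ x : ZMod 2, x ≠ 1 → x = 0 := by decide
    exact this _ hne
  have hw : (w * t) * t = w := by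
    rw [mul_assoc, h.1.mul_self, mul_one]
  have hmul := parity_mul cs (w * t) t t
  rw [hw] at hmul
  have htt : t * t * t⁻¹ = t := by
    rw [h.1.mul_self, one_mul, h.1.inv]
  rw [htt, parity_self cs h.1, h0] at hmul
  have h1 : parity cs (w * t) t = 1 := by
    have : ∀ x : ZMod 2, (0 : ZMod 2) = 1 + x → x = 1 := by decide
    exact this _ hmul
  have hinv := isRightInversion_of_parity cs h.1 h1
  rw [IsRightInversion, hw] at hinv
  have := h.2
  omega

theorem strong_exchange_right {ω : List B} (hred : cs.IsReduced ω) {t : W}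
    (h : cs.IsRightInversion (π ω) t) :
    ∃ j < ω.length, π ω * t = π (ω.eraseIdx j) := by
  have hmem : t ∈ cs.rightInvSeq ω := by
    have hp := parity_of_isRightInversion cs h
    rw [parity_wordProd] at hp
    by_contra hmem
    rw [List.count_eq_zero_of_not_mem hmem] at hp
    simp at hp
  obtain ⟨j, hj, hget⟩ := List.mem_iff_getElem.mp hmem
  rw [length_rightInvSeq] at hj
  refine ⟨j, hj, ?_⟩
  have : (cs.rightInvSeq ω).getD j 1 = t := by
    rw [List.getD_eq_getElem _ _ (by rw [length_rightInvSeq]; exact hj), hget]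
  rw [← this]
  exact cs.wordProd_mul_getD_rightInvSeq ω j

/-- The lifting lemma: if `s j` is a right descent of `x` and `s i` a left descent, and
`ℓ (s i * x * s j) ≥ ℓ x`, then `s i * x = x * s j`. -/
theorem lift_lemma {x : W} {i j : B} (h1 : ℓ (x * cs.simple j) < ℓ x)
    (h2 : ℓ (cs.simple i * x) < ℓ x) (h3 : ℓ x ≤ ℓ (cs.simple i * x * cs.simple j)) :
    cs.simple i * x = x * cs.simple j := by
  -- build a reduced word of x ending with j
  obtain ⟨τ, hτlen, hτ⟩ := cs.exists_reduced_word (x * cs.simple j)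
  have hxlen : ℓ (x * cs.simple j) + 1 = ℓ x := by
    rcases cs.length_mul_simple x j with hc | hc
    · omega
    · exact hc
  set ω := τ ++ [j] with hω
  have hπω : π ω = x := by
    rw [hω, wordProd_append, ← hτ, wordProd_singleton, mul_assoc, cs.simple_mul_simple_self,
      mul_one]
  have hωlen : ω.length = ℓ x := by
    simp [hω, show τ.length = ℓ (x * cs.simple j) by rw [hτ]; exact hτlen.eq.symm]
    omega
  have hred : cs.IsReduced ω := by
    rw [CoxeterSystem.IsReduced, hπω, hωlen]
  -- the reflection
  set t := x⁻¹ * cs.simple i * x with hts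
  have htrefl : cs.IsReflection t := by
    have := (cs.isReflection_simple i).conj x⁻¹
    rwa [inv_inv] at this
  have hxt : x * t = cs.simple i * x := by
    rw [hts]
    group
  have hinv : cs.IsRightInversion x t := ⟨htrefl, by rw [hxt]; exact h2⟩
  rw [← hπω] at hinv
  obtain ⟨j', hj', hex⟩ := strong_exchange_right cs hred hinv
  rw [hπω, hxt] at hex
  have hωl : ω.length = τ.length + 1 := by simp [hω]
  rcases eq_or_lt_of_le (Nat.lt_succ_iff.mp (hωl ▸ hj')) with heq | hlt
  · -- erased the last letter
    rw [heq] at hex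
    have : ω.eraseIdx τ.length = τ := by
      rw [hω, List.eraseIdx_append_of_length_le (le_refl _)]
      simp
    rw [this, ← hτ] at hex
    exact hex
  · -- erased an earlier letter: contradiction
    exfalso
    have : ω.eraseIdx j' = τ.eraseIdx j' ++ [j] := List.eraseIdx_append_of_lt_length hlt _
    rw [this, wordProd_append, wordProd_singleton] at hex
    have hsixj : cs.simple i * x * cs.simple j = π (τ.eraseIdx j') := by
      rw [hex, mul_assoc, cs.simple_mul_simple_self, mul_one]
    have hlen2 : ℓ (cs.simple i * x * cs.simple j) ≤ (τ.eraseIdx j').length := by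
      rw [hsixj]
      exact cs.length_wordProd_le _
    have : (τ.eraseIdx j').length < τ.length := by
      rw [List.length_eraseIdx_of_lt hlt]
      omega
    omega


lemma rcMk_eq_iff (H : Subgroup W) (x y : W) : rcMk H x = rcMk H y ↔ y * x⁻¹ ∈ H := by
  rw [rcMk, rcMk, Quotient.eq]
  exact QuotientGroup.rightRel_apply

lemma rcMul_mk (H : Subgroup W) (x g : W) : rcMul H (rcMk H x) g = rcMk H (x * g) :=
  Quotient.map_mk _ _ _

lemma sAct_mk (Θ : Set B) (x : W) (α : B) :
    sAct cs Θ (rcMk (WP cs Θ) x) α = rcMk (WP cs Θ) (x * cs.simple α) :=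
  rcMul_mk _ _ _

lemma sAct_sAct (Θ : Set B) (C : RightCoset (WP cs Θ)) (α : B) :
    sAct cs Θ (sAct cs Θ C α) α = C := by
  induction C using Quotient.inductionOn with
  | h x =>
    show sAct cs Θ (sAct cs Θ (rcMk (WP cs Θ) x) α) α = rcMk (WP cs Θ) x
    rw [sAct_mk, sAct_mk, mul_assoc, cs.simple_mul_simple_self, mul_one]

lemma exists_word_WP (Θ : Set B) {h : W} (hh : h ∈ WP cs Θ) :
    ∃ l : List B, (∀ b ∈ l, b ∈ Θ) ∧ π l = h := by
  induction hh using Subgroup.closure_induction with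
  | mem x hx =>
    obtain ⟨θ, hθ, rfl⟩ := hx
    exact ⟨[θ], by simpa using hθ, by simp⟩
  | one => exact ⟨[], by simp, by simp⟩
  | mul x y hx hy ihx ihy =>
    obtain ⟨l1, hl1, rfl⟩ := ihx
    obtain ⟨l2, hl2, rfl⟩ := ihy
    refine ⟨l1 ++ l2, ?_, by rw [wordProd_append]⟩
    intro b hb
    rcases List.mem_append.mp hb with h | h
    · exact hl1 b h
    · exact hl2 b h
  | inv x hx ihx =>
    obtain ⟨l, hl, rfl⟩ := ihx
    exact ⟨l.reverse, fun b hb => hl b (List.mem_reverse.mp hb), by rw [wordProd_reverse]⟩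

lemma wordProd_mem_WP (Θ : Set B) {l : List B} (hl : ∀ b ∈ l, b ∈ Θ) :
    π l ∈ WP cs Θ := by
  induction l with
  | nil => simpa using Subgroup.one_mem _
  | cons i l ih =>
    rw [wordProd_cons]
    refine Subgroup.mul_mem _ ?_ (ih fun b hb => hl b (List.mem_cons_of_mem _ hb))
    exact Subgroup.subset_closure ⟨i, hl i (List.mem_cons_self), rfl⟩

lemma exists_flip (P : ℕ → Prop) (k : ℕ) (h0 : ¬ P 0) (hk : P k) :
    ∃ j, j + 1 ≤ k ∧ ¬ P j ∧ P (j + 1) := by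
  induction k with
  | zero => exact absurd hk h0
  | succ k ih =>
    by_cases hPk : P k
    · obtain ⟨j, hj, h⟩ := ih hPk
      exact ⟨j, by omega, h⟩
    · exact ⟨k, le_refl _, hPk, hk⟩

lemma deodhar_le (Θ : Set B) (wc : RightCoset (WP cs Θ) → W)
    (hmem : ∀ C, rcMk (WP cs Θ) (wc C) = C)
    (hmax : ∀ C x, rcMk (WP cs Θ) x = C → cs.length x ≤ cs.length (wc C))
    (huniq : ∀ C x, rcMk (WP cs Θ) x = C → cs.length x = cs.length (wc C) → x = wc C)
    (α : B) (C : RightCoset (WP cs Θ)) (hne : sAct cs Θ C α ≠ C)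
    (hle : ℓ (wc (sAct cs Θ C α)) ≤ ℓ (wc C)) :
    wc (sAct cs Θ C α) = wc C * cs.simple α := by
  set D := sAct cs Θ C α with hD
  set w := wc C with hw
  set u := wc D with hu
  have hCw : rcMk (WP cs Θ) w = C := hmem C
  have hDu : rcMk (WP cs Θ) u = D := hmem D
  have hD_ws : rcMk (WP cs Θ) (w * cs.simple α) = D := by
    rw [hD, ← hCw, sAct_mk]
  have hC_us : rcMk (WP cs Θ) (u * cs.simple α) = C := by
    have h2 : sAct cs Θ D α = C := by rw [hD, sAct_sAct]
    rw [← h2, ← hDu, sAct_mk]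
  have hws_le : ℓ (w * cs.simple α) ≤ ℓ u := hmax D _ hD_ws
  have hws : ℓ (w * cs.simple α) + 1 = ℓ w := by
    rcases cs.length_mul_simple w α with hc | hc
    · omega
    · exact hc
  by_cases hlu : ℓ (w * cs.simple α) = ℓ u
  · exact (huniq D _ hD_ws hlu).symm
  · exfalso
    have hun : ℓ u = ℓ w := by omega
    have hus : ℓ (u * cs.simple α) + 1 = ℓ u := by
      have h1 : ℓ (u * cs.simple α) ≤ ℓ w := hmax C _ hC_us
      rcases cs.length_mul_simple u α with hc | hc
      · omega
      · exact hc
    have hhmem : (u * cs.simple α) * w⁻¹ ∈ WP cs Θ := by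
      rw [← rcMk_eq_iff]
      exact hCw.trans hC_us.symm
    obtain ⟨l, hlΘ, hl⟩ := exists_word_WP cs Θ hhmem
    set x : ℕ → W := fun j => π (l.drop j) * w with hx
    have hx0 : x 0 = u * cs.simple α := by
      simp only [hx, List.drop_zero, hl]
      group
    have hxk : x l.length = w := by
      simp [hx]
    set P : ℕ → Prop := fun j => ℓ (x j * cs.simple α) < ℓ (x j) with hPdef
    have hP0 : ¬ P 0 := by
      simp only [hPdef, hx0]
      rw [mul_assoc, cs.simple_mul_simple_self, mul_one]
      omega
    have hPk : P l.length := by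
      simp only [hPdef, hxk]
      omega
    obtain ⟨j, hjk, hPj, hPj1⟩ := exists_flip P l.length hP0 hPk
    have hjlt : j < l.length := hjk
    obtain ⟨i0, hi0⟩ : ∃ b, l[j]'hjlt = b := ⟨_, rfl⟩
    have hi0Θ : i0 ∈ Θ := hi0 ▸ hlΘ _ (List.getElem_mem _)
    have hxj : x j = cs.simple i0 * x (j + 1) := by
      simp only [hx]
      rw [List.drop_eq_getElem_cons hjlt, hi0, wordProd_cons, mul_assoc]
    set y := x (j + 1) with hy
    have hPj1' : ℓ (y * cs.simple α) < ℓ y := hPj1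
    have hPj' : ¬ ℓ ((cs.simple i0 * y) * cs.simple α) < ℓ (cs.simple i0 * y) := by
      rw [← hxj]
      exact hPj
    have hys : ℓ (y * cs.simple α) + 1 = ℓ y := by
      rcases cs.length_mul_simple y α with hc | hc
      · omega
      · exact hc
    have hγy : ℓ (cs.simple i0 * y) + 1 = ℓ y := by
      rcases cs.length_simple_mul y i0 with hc | hc
      · exfalso
        have h2 : ℓ (cs.simple i0 * (y * cs.simple α)) ≤ ℓ (y * cs.simple α) + 1 := by
          rcases cs.length_simple_mul (y * cs.simple α) i0 with hd | hd
          · omega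
          · omega
        rw [← mul_assoc] at h2
        omega
      · exact hc
    have h3 : ℓ y ≤ ℓ (cs.simple i0 * y * cs.simple α) := by
      rcases cs.length_simple_mul (y * cs.simple α) i0 with hc | hc
      · rw [← mul_assoc] at hc; omega
      · rw [← mul_assoc] at hc; omega
    have hlift : cs.simple i0 * y = y * cs.simple α :=
      lift_lemma cs (by omega) (by omega) h3
    have hdropΘ : ∀ b ∈ l.drop (j + 1), b ∈ Θ := fun b hb => hlΘ b (List.mem_of_mem_drop hb)
    have hyC : rcMk (WP cs Θ) y = C := by
      rw [← hCw, rcMk_eq_iff]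
      have : w * y⁻¹ = (π (l.drop (j + 1)))⁻¹ := by
        simp only [hy, hx]
        group
      rw [this]
      exact Subgroup.inv_mem _ (wordProd_mem_WP cs Θ hdropΘ)
    have hysD : rcMk (WP cs Θ) (y * cs.simple α) = D := by
      rw [hD, ← hyC, sAct_mk]
    have hyγC : rcMk (WP cs Θ) (cs.simple i0 * y) = C := by
      rw [← hyC, rcMk_eq_iff]
      have : y * (cs.simple i0 * y)⁻¹ = (cs.simple i0)⁻¹ := by group
      rw [this]
      exact Subgroup.inv_mem _ (Subgroup.subset_closure ⟨i0, hi0Θ, rfl⟩)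
    rw [hlift, hysD] at hyγC
    exact hne hyγC

theorem deodhar (Θ : Set B) (wc : RightCoset (WP cs Θ) → W)
    (hmem : ∀ C, rcMk (WP cs Θ) (wc C) = C)
    (hmax : ∀ C x, rcMk (WP cs Θ) x = C → cs.length x ≤ cs.length (wc C))
    (huniq : ∀ C x, rcMk (WP cs Θ) x = C → cs.length x = cs.length (wc C) → x = wc C)
    (α : B) (C : RightCoset (WP cs Θ)) (hne : sAct cs Θ C α ≠ C) :
    wc (sAct cs Θ C α) = wc C * cs.simple α := by
  rcases le_total (ℓ (wc (sAct cs Θ C α))) (ℓ (wc C)) with hle | hle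
  · exact deodhar_le cs Θ wc hmem hmax huniq α C hne hle
  · have hne' : sAct cs Θ (sAct cs Θ C α) α ≠ sAct cs Θ C α := by
      rw [sAct_sAct]
      exact fun h => hne h.symm
    have h := deodhar_le cs Θ wc hmem hmax huniq α (sAct cs Θ C α) hne'
      (by rw [sAct_sAct]; exact hle)
    rw [sAct_sAct] at h
    rw [h, mul_assoc, cs.simple_mul_simple_self, mul_one]

end StrongExch


namespace StrongExch
variable {M : CoxeterMatrix B} (cs : CoxeterSystem M W)

lemma bruhatLT_length {x y : W} (h : BruhatLT cs x y) : cs.length x < cs.length y := by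
  induction h with
  | single h => exact h.2
  | tail _ h ih => exact lt_trans ih h.2

lemma bruhatLT_asymm {x y : W} (h : BruhatLT cs x y) : ¬ BruhatLT cs y x := by
  intro h'
  have := bruhatLT_length cs h
  have := bruhatLT_length cs h'
  omega

lemma bruhatLT_step {x : W} {α : B} (h : cs.length x < cs.length (x * cs.simple α)) :
    BruhatLT cs x (x * cs.simple α) :=
  Relation.TransGen.single ⟨⟨cs.simple α, cs.isReflection_simple α, rfl⟩, h⟩

end StrongExch

/-- The operators `S_α := T_α − q` on `H_Θ` satisfy the quadratic relation
of the Hecke algebra: `(S_α + q)(S_α − q⁻¹) = 0`.  Here `W` is the (finite) Weyl group of a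
Coxeter system, `Θ` a subset of the simple roots, `W_Θ` the corresponding parabolic
subgroup, `wc C` denotes the unique longest representative of the right coset
`C ∈ W_Θ\W`, and the order on cosets is the Bruhat order on longest representatives. -/
theorem stmt0 [Finite W] {M : CoxeterMatrix B} (cs : CoxeterSystem M W) (Θ : Set B)
    (wc : RightCoset (WP cs Θ) → W)
    (hmem : ∀ C, rcMk (WP cs Θ) (wc C) = C)
    (hmax : ∀ C x, rcMk (WP cs Θ) x = C → cs.length x ≤ cs.length (wc C))
    (huniq : ∀ C x, rcMk (WP cs Θ) x = C → cs.length x = cs.length (wc C) → x = wc C)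
    (α : B) :
    ((Tmap cs (sAct cs Θ) wc α - qq • 1) + qq • 1) *
      ((Tmap cs (sAct cs Θ) wc α - qq • 1) - qqinv • 1) =
    (0 : Module.End (LaurentPolynomial ℤ) (RightCoset (WP cs Θ) →₀ LaurentPolynomial ℤ)) := by
  classical
  have key := StrongExch.deodhar cs Θ wc hmem hmax huniq α
  rw [show (Tmap cs (sAct cs Θ) wc α - qq • 1 + qq • 1) = Tmap cs (sAct cs Θ) wc α from by abel]
  have hq1 : qqinv * qq = 1 := by
    rw [qqinv, qq, ← LaurentPolynomial.T_add]
    norm_num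
  set T := Tmap cs (sAct cs Θ) wc α with hT
  have hTs : ∀ (E : RightCoset (WP cs Θ)) (c : LaurentPolynomial ℤ),
      T (Finsupp.single E c) = c • (if sAct cs Θ E α = E
        then (0 : RightCoset (WP cs Θ) →₀ LaurentPolynomial ℤ)
        else if BruhatLT cs (wc E) (wc (sAct cs Θ E α)) then
          qq • Finsupp.single E 1 + Finsupp.single (sAct cs Θ E α) 1
        else
          qqinv • Finsupp.single E 1 + Finsupp.single (sAct cs Θ E α) 1) := by
    intro E c
    rw [hT, Tmap, Finsupp.linearCombination_single]
    congr
  apply Finsupp.lhom_ext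
  intro C b
  rw [Module.End.mul_apply, LinearMap.sub_apply, LinearMap.sub_apply, LinearMap.smul_apply,
    LinearMap.smul_apply, Module.End.one_apply, LinearMap.zero_apply,
    map_sub, map_sub, map_smul, map_smul]
  by_cases hfix : sAct cs Θ C α = C
  · have h0 : T (Finsupp.single C b) = 0 := by rw [hTs, if_pos hfix, smul_zero]
    rw [h0]
    simp
  · set D := sAct cs Θ C α with hD
    have hkey : wc D = wc C * cs.simple α := key C hfix
    have hDC : sAct cs Θ D α = C := by rw [hD, StrongExch.sAct_sAct]
    have hDne : sAct cs Θ D α ≠ D := by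
      rw [hDC]
      intro h
      exact hfix h.symm
    have hlne : cs.length (wc C * cs.simple α) ≠ cs.length (wc C) :=
      cs.length_mul_simple_ne (wc C) α
    have hTD : ∀ c : LaurentPolynomial ℤ, T (Finsupp.single D c)
        = c • (if BruhatLT cs (wc D) (wc C) then
            qq • Finsupp.single D 1 + Finsupp.single C 1
          else
            qqinv • Finsupp.single D 1 + Finsupp.single C 1) := by
      intro c
      rw [hTs, if_neg hDne, hDC]
    have hTC : ∀ c : LaurentPolynomial ℤ, T (Finsupp.single C c)
        = c • (if BruhatLT cs (wc C) (wc D) then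
            qq • Finsupp.single C 1 + Finsupp.single D 1
          else
            qqinv • Finsupp.single C 1 + Finsupp.single D 1) := by
      intro c
      rw [hTs, if_neg hfix]
    rcases Nat.lt_or_ge (cs.length (wc C)) (cs.length (wc D)) with hcase | hcase
    · -- wc C < wc D in Bruhat order
      have hbC : BruhatLT cs (wc C) (wc D) := by
        rw [hkey]
        exact StrongExch.bruhatLT_step cs (by rw [← hkey]; exact hcase)
      have hbD : ¬ BruhatLT cs (wc D) (wc C) := StrongExch.bruhatLT_asymm cs hbC
      have e1 : T (Finsupp.single C b)
          = b • (qq • Finsupp.single C 1 + Finsupp.single D 1) := by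
        rw [hTC b, if_pos hbC]
      have e2 : T (b • (qq • Finsupp.single C 1 + Finsupp.single D 1))
          = b • (qq • T (Finsupp.single C 1) + T (Finsupp.single D 1)) := by
        rw [map_smul, map_add, map_smul]
      rw [e1, e2, hTC 1, hTD 1, if_pos hbC, if_neg hbD, one_smul, one_smul]
      match_scalars
      · linear_combination (-b) * hq1
      · ring
    · -- wc D < wc C
      have hlt : cs.length (wc D) < cs.length (wc C) := by
        rw [hkey] at hcase ⊢
        omega
      have hbC : ¬ BruhatLT cs (wc C) (wc D) := by
        intro h
        have := StrongExch.bruhatLT_length cs h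
        omega
      have hbD : BruhatLT cs (wc D) (wc C) := by
        have hWC : wc C = wc D * cs.simple α := by
          rw [hkey, mul_assoc, cs.simple_mul_simple_self, mul_one]
        rw [hWC]
        exact StrongExch.bruhatLT_step cs (by rw [← hWC]; exact hlt)
      have e1 : T (Finsupp.single C b)
          = b • (qqinv • Finsupp.single C 1 + Finsupp.single D 1) := by
        rw [hTC b, if_neg hbC]
      have e2 : T (b • (qqinv • Finsupp.single C 1 + Finsupp.single D 1))
          = b • (qqinv • T (Finsupp.single C 1) + T (Finsupp.single D 1)) := by
        rw [map_smul, map_add, map_smul]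
      rw [e1, e2, hTC 1, hTD 1, if_neg hbC, if_pos hbD, one_smul, one_smul]
      match_scalars
      · linear_combination (-b) * hq1
      · ring


end
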